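/- Let R be a commutative unital ring and α₁, β₁, α₂, β₂, ξ₁, τ₁, ξ₂, τ₂ ∈ R satisfy α₁τ₁ = ξ₁β₁, α₂τ₂ = ξ₂β₂, and 1 = α₁τ₂ − ξ₂β₁ = ξ₁β₂ − α₂τ₁. Then (ξ₁τ₂ − ξ₂τ₁)·(α₁β₂ − α₂β₁) = 1; in particular both γ = α₁β₂ − α₂β₁ and δ = ξ₁τ₂ − ξ₂τ₁ are units of R. -/

import Mathlib

/-- The key ring computation in the regularization of Mal'cev's interpretation:
if `α₁τ₁ = ξ₁β₁`, `α₂τ₂ = ξ₂β₂` and `1 = α₁τ₂ − ξ₂β₁ = ξ₁β₂ − α₂τ₁`, then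
`(ξ₁τ₂ − ξ₂τ₁)(α₁β₂ − α₂β₁) = 1`, so both factors are units. -/
theorem malcev_unit_computation (R : Type*) [CommRing R]
    (α₁ β₁ α₂ β₂ ξ₁ τ₁ ξ₂ τ₂ : R)
    (h₁ : α₁ * τ₁ = ξ₁ * β₁) (h₂ : α₂ * τ₂ = ξ₂ * β₂)
    (h₃ : α₁ * τ₂ - ξ₂ * β₁ = 1) (h₄ : ξ₁ * β₂ - α₂ * τ₁ = 1) :
    (ξ₁ * τ₂ - ξ₂ * τ₁) * (α₁ * β₂ - α₂ * β₁) = 1 ∧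
    IsUnit (α₁ * β₂ - α₂ * β₁) ∧ IsUnit (ξ₁ * τ₂ - ξ₂ * τ₁) := by
  have key : (ξ₁ * τ₂ - ξ₂ * τ₁) * (α₁ * β₂ - α₂ * β₁) = 1 := by
    linear_combination (ξ₁ * β₂ - α₂ * τ₁) * h₃ + h₄ + (α₂ * τ₂ - ξ₂ * β₂) * h₁
  exact ⟨key, IsUnit.of_mul_eq_one _ (by rw [mul_comm]; exact key),
    IsUnit.of_mul_eq_one _ key⟩
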